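/- arXiv:2505.00110 — 4 statements merged into one kernel-verified Lean document; each statement's English description precedes it below -/
import Mathlib

section
/- For any x = (x_1,…,x_d) ∈ ℝ^d, the parity function f₀(x) = ∏_{i=1}^d (2·𝟙(x_i ≥ 0) − 1) satisfies f₀(x) = (−1)^d + 2 Σ_{k=1}^d (−1)^{k+d} · 𝟙( (Σ_{i=1}^d 𝟙(x_i ≥ 0)) − k ≥ 0 ). -/
noncomputable def heaviside (t : ℝ) : ℝ := if 0 ≤ t then 1 else 0

lemma sum_neg_one_pow_Icc (N : ℕ) :
    ∑ k ∈ Finset.Icc 1 N, (-1 : ℝ) ^ k = ((-1) ^ N - 1) / 2 := by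
  induction N with
  | zero => simp
  | succ n ih =>
      rw [Finset.sum_Icc_succ_top (by omega), ih, pow_succ]
      ring

/-- The parity function as a two-hidden-layer Heaviside network. -/
theorem parity_heaviside_representation (d : ℕ) (x : Fin d → ℝ) :
    (∏ i, (2 * heaviside (x i) - 1)) =
      (-1 : ℝ) ^ d +
        2 * ∑ k ∈ Finset.Icc 1 d,
          (-1 : ℝ) ^ (k + d) * heaviside ((∑ i, heaviside (x i)) - k) := by
  classical
  set N := (Finset.univ.filter fun i => 0 ≤ x i).card with hN
  have hNd : N ≤ d := by
    simpa using Finset.card_filter_le Finset.univ (fun i => 0 ≤ x i)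
  have hsum : (∑ i, heaviside (x i)) = (N : ℝ) := by
    simp [heaviside, Finset.sum_boole, hN]
  have hprod : (∏ i, (2 * heaviside (x i) - 1)) = (-1 : ℝ) ^ (d - N) := by
    have : (∏ i, (2 * heaviside (x i) - 1)) =
        ∏ i, (if 0 ≤ x i then (1 : ℝ) else -1) := by
      apply Finset.prod_congr rfl
      intro i _
      by_cases h : 0 ≤ x i <;> simp [heaviside, h] <;> ring
    rw [this, Finset.prod_ite, Finset.prod_const, Finset.prod_const]
    have hc : (Finset.univ.filter fun i => ¬ 0 ≤ x i).card = d - N := by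
      have := Finset.card_filter_add_card_filter_not
        (s := (Finset.univ : Finset (Fin d))) (p := fun i => 0 ≤ x i)
      simp only [Finset.card_univ, Fintype.card_fin] at this
      omega
    have h2 : (Finset.univ.filter fun i => x i < 0) = (Finset.univ.filter fun i => ¬ 0 ≤ x i) := by
      simp [not_le]
    simp only [one_pow, one_mul]
    rw [hc]
  have hterm : ∀ k ∈ Finset.Icc 1 d,
      (-1 : ℝ) ^ (k + d) * heaviside ((∑ i, heaviside (x i)) - k) =
        if k ≤ N then (-1 : ℝ) ^ (k + d) else 0 := by
    intro k hk
    rw [hsum]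
    have : (0 : ℝ) ≤ (N : ℝ) - k ↔ k ≤ N := by
      rw [sub_nonneg, Nat.cast_le]
    by_cases h : k ≤ N <;> simp [heaviside, this, h]
  rw [Finset.sum_congr rfl hterm, Finset.sum_ite, Finset.sum_const_zero, add_zero]
  have hfilter : (Finset.Icc 1 d).filter (fun k => k ≤ N) = Finset.Icc 1 N := by
    ext k; simp [Finset.mem_Icc, Finset.mem_filter]; omega
  rw [hfilter]
  have : ∑ k ∈ Finset.Icc 1 N, (-1 : ℝ) ^ (k + d) =
      (-1 : ℝ) ^ d * (((-1) ^ N - 1) / 2) := by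
    rw [← sum_neg_one_pow_Icc, Finset.mul_sum]
    apply Finset.sum_congr rfl
    intro k _
    rw [pow_add]; ring
  rw [this, hprod]
  have hsq : ((-1 : ℝ) ^ N) * ((-1 : ℝ) ^ N) = 1 := by
    rw [← pow_add]; simp [pow_add, ← two_mul]
  have key : (-1 : ℝ) ^ (d - N) * (-1) ^ N = (-1) ^ d := by
    rw [← pow_add, Nat.sub_add_cancel hNd]
  have : (-1 : ℝ) ^ (d - N) = (-1) ^ d * (-1) ^ N := by
    calc (-1 : ℝ) ^ (d - N) = (-1 : ℝ) ^ (d - N) * ((-1) ^ N * (-1) ^ N) := by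
            rw [hsq, mul_one]
      _ = ((-1 : ℝ) ^ (d - N) * (-1) ^ N) * (-1) ^ N := by ring
      _ = (-1) ^ d * (-1) ^ N := by rw [key]
  rw [this]; ring
end

section
/- Let m ≥ 1 be an integer and f₀ : [0,1] → ℝ be continuous. For every piecewise constant function f : [0,1] → ℝ with at most m pieces, sup_{t ∈ [0,1]} |f(t) − f₀(t)| ≥ (sup_{t ∈ [0,1]} f₀(t) − inf_{t ∈ [0,1]} f₀(t)) / (2m). -/
open Set MeasureTheory

/-- Lower bound for approximating a continuous function on `[0,1]` by piecewise
constant functions with at most `m` pieces. -/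
theorem piecewise_constant_approx_lower_bound (m : ℕ) (hm : 1 ≤ m) (f f₀ : ℝ → ℝ)
    (hcont : ContinuousOn f₀ (Set.Icc 0 1))
    (hf : ∃ (A : Fin m → Set ℝ) (c : Fin m → ℝ),
      (∀ i, (A i).OrdConnected) ∧
      (Pairwise fun i j => Disjoint (A i) (A j)) ∧
      (⋃ i, A i) = Set.Icc (0 : ℝ) 1 ∧
      ∀ x ∈ Set.Icc (0 : ℝ) 1, f x = ∑ i, c i * Set.indicator (A i) (fun _ => (1 : ℝ)) x) :
    ((⨆ t : Set.Icc (0 : ℝ) 1, f₀ t) - ⨅ t : Set.Icc (0 : ℝ) 1, f₀ t) / (2 * m) ≤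
      ⨆ t : Set.Icc (0 : ℝ) 1, |f t - f₀ t| := by
  obtain ⟨A, c, hord, hdisj, hcover, hsum⟩ := hf
  have h01 : (0:ℝ) ∈ Set.Icc (0:ℝ) 1 := by norm_num
  have hne : (Set.Icc (0:ℝ) 1).Nonempty := ⟨0, h01⟩
  have hcomp : IsCompact (Set.Icc (0:ℝ) 1) := isCompact_Icc
  -- f is constant c i on A i
  have hfA : ∀ i, ∀ x ∈ A i, f x = c i := by
    intro i x hx
    have hxI : x ∈ Set.Icc (0:ℝ) 1 := hcover ▸ Set.mem_iUnion.mpr ⟨i, hx⟩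
    rw [hsum x hxI, Finset.sum_eq_single i]
    · rw [Set.indicator_of_mem hx]; ring
    · intro j _ hj
      have hnx : x ∉ A j := fun hxj => (hdisj hj).ne_of_mem hxj hx rfl
      rw [Set.indicator_of_notMem hnx]; ring
    · simp
  -- bounds
  obtain ⟨C, hC⟩ := hcomp.exists_bound_of_continuousOn hcont
  have hmem : ∀ x ∈ Set.Icc (0:ℝ) 1, ∃ i, x ∈ A i := by
    intro x hx
    exact Set.mem_iUnion.mp (hcover ▸ hx)
  have hFne : (Finset.univ : Finset (Fin m)).Nonempty := ⟨⟨0, hm⟩, Finset.mem_univ _⟩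
  set B := Finset.univ.sup' hFne (fun i => |c i|) with hB
  have hfB : ∀ x ∈ Set.Icc (0:ℝ) 1, |f x| ≤ B := by
    intro x hx
    obtain ⟨i, hi⟩ := hmem x hx
    rw [hfA i x hi]
    exact Finset.le_sup' (fun i => |c i|) (Finset.mem_univ i)
  have hbdd : BddAbove (Set.range fun t : Set.Icc (0:ℝ) 1 => |f t - f₀ t|) := by
    refine ⟨B + C, ?_⟩
    rintro y ⟨⟨x, hx⟩, rfl⟩
    calc |f x - f₀ x| ≤ |f x| + |f₀ x| := abs_sub _ _
      _ ≤ B + C := add_le_add (hfB x hx) (hC x hx)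
  set S := ⨆ t : Set.Icc (0:ℝ) 1, |f t - f₀ t| with hSdef
  have hS : ∀ x ∈ Set.Icc (0:ℝ) 1, |f x - f₀ x| ≤ S := by
    intro x hx
    exact le_ciSup hbdd ⟨x, hx⟩
  have hS0 : 0 ≤ S := le_trans (abs_nonneg _) (hS 0 h01)
  -- extrema
  obtain ⟨a, haI, ha'⟩ := hcomp.exists_isMaxOn hne hcont
  obtain ⟨b, hbI, hb'⟩ := hcomp.exists_isMinOn hne hcont
  have ha : ∀ x ∈ Set.Icc (0:ℝ) 1, f₀ x ≤ f₀ a := fun x hx => ha' hx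
  have hb : ∀ x ∈ Set.Icc (0:ℝ) 1, f₀ b ≤ f₀ x := fun x hx => hb' hx
  have hbdd₀ : BddAbove (Set.range fun t : Set.Icc (0:ℝ) 1 => f₀ t) :=
    ⟨f₀ a, by rintro y ⟨⟨x, hx⟩, rfl⟩; exact ha x hx⟩
  have hbdd₁ : BddBelow (Set.range fun t : Set.Icc (0:ℝ) 1 => f₀ t) :=
    ⟨f₀ b, by rintro y ⟨⟨x, hx⟩, rfl⟩; exact hb x hx⟩
  have hM : (⨆ t : Set.Icc (0:ℝ) 1, f₀ t) = f₀ a :=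
    le_antisymm (ciSup_le fun ⟨x, hx⟩ => ha x hx) (le_ciSup hbdd₀ ⟨a, haI⟩)
  have hL : (⨅ t : Set.Icc (0:ℝ) 1, f₀ t) = f₀ b :=
    le_antisymm (ciInf_le hbdd₁ ⟨b, hbI⟩) (le_ciInf fun ⟨x, hx⟩ => hb x hx)
  have hba : f₀ b ≤ f₀ a := hb a haI
  -- IVT
  have hsub : Set.uIcc a b ⊆ Set.Icc (0:ℝ) 1 := Set.uIcc_subset_Icc haI hbI
  have hivt : Set.uIcc (f₀ a) (f₀ b) ⊆ f₀ '' Set.uIcc a b :=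
    intermediate_value_uIcc (hcont.mono hsub)
  have huicc : Set.uIcc (f₀ a) (f₀ b) = Set.Icc (f₀ b) (f₀ a) := Set.uIcc_of_ge hba
  -- covering
  have key : Set.Icc (f₀ b) (f₀ a) ⊆ ⋃ i, Set.Icc (c i - S) (c i + S) := by
    intro y hy
    obtain ⟨x, hxu, hfx⟩ := hivt (huicc ▸ hy)
    have hxI : x ∈ Set.Icc (0:ℝ) 1 := hsub hxu
    obtain ⟨i, hi⟩ := hmem x hxI
    have hfx' : f x = c i := hfA i x hi
    have := hS x hxI
    rw [hfx', hfx] at this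
    rw [abs_sub_le_iff] at this
    exact Set.mem_iUnion.mpr ⟨i, by constructor <;> linarith [this.1, this.2]⟩
  -- measure argument
  have hmeas : volume (Set.Icc (f₀ b) (f₀ a)) ≤ ∑' i : Fin m, volume (Set.Icc (c i - S) (c i + S)) :=
    (measure_mono key).trans (measure_iUnion_le _)
  have h2 : ∀ i : Fin m, volume (Set.Icc (c i - S) (c i + S)) = ENNReal.ofReal (2 * S) := by
    intro i; rw [Real.volume_Icc]; congr 1; ring
  rw [tsum_fintype] at hmeas
  simp only [h2, Finset.sum_const, Finset.card_univ, Fintype.card_fin, nsmul_eq_mul] at hmeas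
  rw [Real.volume_Icc] at hmeas
  have hcast : (m : ENNReal) * ENNReal.ofReal (2 * S) = ENNReal.ofReal ((m : ℝ) * (2 * S)) := by
    rw [← ENNReal.ofReal_natCast m, ← ENNReal.ofReal_mul (by positivity)]
  rw [hcast] at hmeas
  have hreal : f₀ a - f₀ b ≤ (m : ℝ) * (2 * S) :=
    (ENNReal.ofReal_le_ofReal_iff (by positivity)).mp hmeas
  have hmpos : (0:ℝ) < m := by exact_mod_cast hm
  rw [hM, hL, div_le_iff₀ (by positivity)]
  nlinarith [hreal]
end

section
/- Let d ≥ 1, L ≥ 1, and let f be any function computed by a deep Heaviside network with L hidden layers and width vector (d, p_1, …, p_L, 1). Then for any x₁, x₂ ∈ [0,1]^d, the restriction t ↦ f((1−t)x₁ + t x₂) on [0,1] is a piecewise constant function with at most p₁ + 1 pieces, where p₁ is the width of the first hidden layer. -/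
/-- Hidden-layer functions of a deep Heaviside network with widths `p`,
weight matrices `W` and shift vectors `b`. -/
noncomputable def dhnHidden (p : ℕ → ℕ)
    (W : ∀ ℓ : ℕ, Matrix (Fin (p (ℓ + 1))) (Fin (p ℓ)) ℝ)
    (b : ∀ ℓ : ℕ, Fin (p (ℓ + 1)) → ℝ) :
    (ℓ : ℕ) → (Fin (p 0) → ℝ) → Fin (p ℓ) → ℝ
  | 0, x => x
  | (ℓ + 1), x => fun j => heaviside ((W ℓ).mulVec (dhnHidden p W b ℓ x) j - b ℓ j)

/-- `g : ℝ → ℝ` is piecewise constant on `[0,1]` with at most `m` pieces. -/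
def PiecewiseConstOn (g : ℝ → ℝ) (m : ℕ) : Prop :=
  ∃ A : Fin m → Set ℝ,
    (∀ i, (A i).OrdConnected) ∧
    (Pairwise fun i j => Disjoint (A i) (A j)) ∧
    (⋃ i, A i) = Set.Icc (0 : ℝ) 1 ∧
    ∀ i, ∀ x ∈ A i, ∀ y ∈ A i, g x = g y

/-- The restriction of a deep Heaviside network to a segment is piecewise
constant with at most `p 1 + 1` pieces. -/
theorem dhn_restriction_piecewise_constant (L : ℕ) (hL : 1 ≤ L)
    (p : ℕ → ℕ) (hd : 1 ≤ p 0)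
    (W : ∀ ℓ : ℕ, Matrix (Fin (p (ℓ + 1))) (Fin (p ℓ)) ℝ)
    (b : ∀ ℓ : ℕ, Fin (p (ℓ + 1)) → ℝ)
    (w : Fin (p L) → ℝ) (c : ℝ)
    (f : (Fin (p 0) → ℝ) → ℝ)
    (hf : ∀ x, f x = (∑ j, w j * dhnHidden p W b L x j) - c)
    (x₁ x₂ : Fin (p 0) → ℝ)
    (hx₁ : x₁ ∈ Set.Icc (0 : Fin (p 0) → ℝ) 1)
    (hx₂ : x₂ ∈ Set.Icc (0 : Fin (p 0) → ℝ) 1) :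
    PiecewiseConstOn (fun t : ℝ => f ((1 - t) • x₁ + t • x₂)) (p 1 + 1) := by
  classical
  set α : Fin (p 1) → ℝ := fun j => (W 0).mulVec x₂ j - (W 0).mulVec x₁ j with hα
  set β : Fin (p 1) → ℝ := fun j => (W 0).mulVec x₁ j - b 0 j with hβ
  set g : Fin (p 1) → ℝ → ℕ := fun j t =>
    if 0 ≤ α j then (if 0 ≤ β j + t * α j then 1 else 0)
    else (if 0 ≤ β j + t * α j then 0 else 1) with hg
  have hgmono : ∀ j, Monotone (g j) := by
    intro j t s hts
    simp only [hg]
    rcases le_or_gt 0 (α j) with ha | ha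
    · simp only [if_pos ha]
      split_ifs with h2 h3 <;> try omega
      exact absurd (by nlinarith : (0:ℝ) ≤ β j + s * α j) h3
    · simp only [if_neg (not_le.mpr ha)]
      split_ifs with h2 h3 <;> try omega
      have h2' := not_le.mp h2
      exfalso; nlinarith
  have hg1 : ∀ j t, g j t ≤ 1 := by
    intro j t; simp only [hg]; split_ifs <;> omega
  set S : ℝ → ℕ := fun t => ∑ j, g j t with hS
  have hSmono : Monotone S := fun t s h => Finset.sum_le_sum fun j _ => hgmono j h
  have hSle : ∀ t, S t ≤ p 1 := by
    intro t
    calc S t ≤ ∑ _j : Fin (p 1), 1 := Finset.sum_le_sum fun j _ => hg1 j t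
    _ = p 1 := by simp
  -- argument of first layer along segment
  have harg : ∀ (t : ℝ) (j : Fin (p 1)),
      (W 0).mulVec ((1 - t) • x₁ + t • x₂) j - b 0 j = β j + t * α j := by
    intro t j
    have : (W 0).mulVec ((1 - t) • x₁ + t • x₂) j
        = (1 - t) * (W 0).mulVec x₁ j + t * (W 0).mulVec x₂ j := by
      rw [Matrix.mulVec_add, Matrix.mulVec_smul, Matrix.mulVec_smul]
      simp [smul_eq_mul]
    rw [this, hβ, hα]; ring
  -- equal S values force equal first layers
  have hlayer1 : ∀ t s : ℝ, t ≤ s → S t = S s →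
      dhnHidden p W b 1 ((1 - t) • x₁ + t • x₂)
        = dhnHidden p W b 1 ((1 - s) • x₁ + s • x₂) := by
    intro t s hts hSS
    have hgeq : ∀ j, g j t = g j s := by
      have := (Finset.sum_eq_sum_iff_of_le (fun j _ => hgmono j hts)).mp hSS
      intro j; exact this j (Finset.mem_univ j)
    funext j
    show heaviside _ = heaviside _
    simp only [dhnHidden]
    rw [harg t j, harg s j]
    have := hgeq j
    simp only [hg] at this
    unfold heaviside
    split_ifs at this ⊢ <;> simp at this ⊢
  -- propagate to layer L
  have hlayerL : ∀ t s : ℝ, t ≤ s → S t = S s →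
      dhnHidden p W b L ((1 - t) • x₁ + t • x₂)
        = dhnHidden p W b L ((1 - s) • x₁ + s • x₂) := by
    intro t s hts hSS
    clear hf w
    induction L, hL using Nat.le_induction with
    | base => exact hlayer1 t s hts hSS
    | succ n hn ih =>
      show (fun j => heaviside _) = fun j => heaviside _
      rw [show dhnHidden p W b n ((1 - t) • x₁ + t • x₂)
            = dhnHidden p W b n ((1 - s) • x₁ + s • x₂) from ih]
  have hfeq : ∀ t s : ℝ, t ≤ s → S t = S s →
      f ((1 - t) • x₁ + t • x₂) = f ((1 - s) • x₁ + s • x₂) := by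
    intro t s hts hSS
    rw [hf, hf, hlayerL t s hts hSS]
  refine ⟨fun i => {t : ℝ | t ∈ Set.Icc (0:ℝ) 1 ∧ S t = (i : ℕ)}, ?_, ?_, ?_, ?_⟩
  · intro i
    constructor
    intro x hx y hy z hz
    exact ⟨⟨le_trans hx.1.1 hz.1, le_trans hz.2 hy.1.2⟩,
      le_antisymm (hy.2 ▸ hSmono hz.2) (hx.2 ▸ hSmono hz.1)⟩
  · intro i j hij
    rw [Set.disjoint_left]
    intro t ht ht'
    exact hij (Fin.ext (ht.2 ▸ ht'.2 ▸ rfl))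
  · ext t
    simp only [Set.mem_iUnion, Set.mem_setOf_eq]
    constructor
    · rintro ⟨i, h, _⟩; exact h
    · intro h
      exact ⟨⟨S t, Nat.lt_succ_of_le (hSle t)⟩, h, rfl⟩
  · intro i t ht s hs
    rcases le_total t s with h | h
    · exact hfeq t s h (ht.2.trans hs.2.symm)
    · exact (hfeq s t h (hs.2.trans ht.2.symm)).symm
end

section
/- Suppose m, w, t are real numbers with m ≥ w ≥ t ≥ 0 and r ≥ 16 satisfies 2^m ≤ 2^t·(m r / w)^w. Then m ≤ t + w·log₂(2 r log₂ r). -/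
private lemma pow_aux (s : ℝ) (hs : 3 ≤ s) : s + 1 ≤ (2:ℝ) ^ (s - 1) := by
  have h1 : (2:ℝ) ^ (s - 1) = 4 * 2 ^ (s - 3) := by
    rw [show s - 1 = 2 + (s - 3) by ring, Real.rpow_add (by norm_num)]
    congr 1
    rw [show (2:ℝ) ^ (2:ℝ) = 2 ^ (2:ℕ) by rw [← Real.rpow_natCast]; norm_num]
    norm_num
  have h2 : Real.log 2 * (s - 3) + 1 ≤ (2:ℝ) ^ (s - 3) := by
    rw [Real.rpow_def_of_pos (by norm_num)]
    exact Real.add_one_le_exp _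
  have hlog : (0.6931471803 : ℝ) < Real.log 2 := Real.log_two_gt_d9
  nlinarith [h2, hlog, hs]

/-- Technical inequality: if `2^m ≤ 2^t·(mr/w)^w` with `m ≥ w ≥ t ≥ 0` and
`r ≥ 16`, then `m ≤ t + w·log₂(2r·log₂ r)`. -/
theorem growth_to_vc_inequality (m w t r : ℝ)
    (ht : 0 ≤ t) (htw : t ≤ w) (hwm : w ≤ m) (hr : 16 ≤ r)
    (h : (2 : ℝ) ^ m ≤ 2 ^ t * (m * r / w) ^ w) :
    m ≤ t + w * Real.logb 2 (2 * r * Real.logb 2 r) := by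
  have h2pos : (0:ℝ) < 2 := by norm_num
  have h2ne : (2:ℝ) ≠ 1 := by norm_num
  have hb : (1:ℝ) < 2 := by norm_num
  rcases eq_or_lt_of_le (ht.trans htw) with hw0 | hw
  · -- w = 0, so t = 0, m = 0
    have hw0 : w = 0 := hw0.symm
    have ht0 : t = 0 := le_antisymm (hw0 ▸ htw) ht
    rw [hw0, Real.rpow_zero, ht0, Real.rpow_zero, mul_one] at h
    have hm0 : m ≤ 0 := by
      by_contra hm
      push_neg at hm
      have := (Real.rpow_lt_rpow_left_iff (x := 2) (y := 0) (z := m) hb).mpr hm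
      rw [Real.rpow_zero] at this
      linarith
    have : m = 0 := le_antisymm hm0 (hw0 ▸ hwm)
    simp [this, ht0, hw0]
  · -- main case w > 0
    have hm : 0 < m := lt_of_lt_of_le hw hwm
    have hrpos : (0:ℝ) < r := by linarith
    have hxpos : 0 < m * r / w := by positivity
    set L := Real.logb 2 r with hL
    have hLr : Real.logb 2 16 ≤ L := Real.logb_le_logb_of_le hb (by norm_num) hr
    have h16 : Real.logb 2 16 = 4 := by
      rw [show (16:ℝ) = 2 ^ (4:ℝ) by
        rw [show (2:ℝ) ^ (4:ℝ) = 2 ^ (4:ℕ) by rw [← Real.rpow_natCast]; norm_num]; norm_num]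
      exact Real.logb_rpow h2pos h2ne
    have hL4 : 4 ≤ L := h16 ▸ hLr
    have hLpos : 0 < L := by linarith
    -- Step 1: take logb of h
    have step1 : m ≤ t + w * Real.logb 2 (m * r / w) := by
      have := Real.logb_le_logb_of_le hb (Real.rpow_pos_of_pos h2pos m) h
      rwa [Real.logb_rpow h2pos h2ne,
        Real.logb_mul (Real.rpow_pos_of_pos h2pos t).ne' (Real.rpow_pos_of_pos hxpos w).ne',
        Real.logb_rpow h2pos h2ne, Real.logb_rpow_eq_mul_logb_of_pos hxpos] at this
    by_contra hc
    push_neg at hc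
    set u := (m - t) / w with hu
    set s := u - L with hs
    -- from hc : logb 2 (2 r L) < u
    have hclog : Real.logb 2 (2 * r * L) < u := by
      rw [hu, lt_div_iff₀ hw]
      linarith
    have hsplit : Real.logb 2 (2 * r * L) = 1 + L + Real.logb 2 L := by
      rw [Real.logb_mul (by positivity) hLpos.ne', Real.logb_mul two_ne_zero hrpos.ne',
        Real.logb_self_eq_one hb]
    have hlogL : 2 ≤ Real.logb 2 L := by
      have : Real.logb 2 4 ≤ Real.logb 2 L := Real.logb_le_logb_of_le hb (by norm_num) hL4
      rwa [show (4:ℝ) = 2 ^ (2:ℝ) by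
        rw [show (2:ℝ) ^ (2:ℝ) = 2 ^ (2:ℕ) by rw [← Real.rpow_natCast]; norm_num]; norm_num,
        Real.logb_rpow h2pos h2ne] at this
    have hs3 : 3 < s := by
      rw [hs]
      have := hsplit ▸ hclog
      linarith
    -- u ≤ logb 2 (u + 1) + L
    have hstep2 : u ≤ Real.logb 2 (u + 1) + L := by
      have h1 : u ≤ Real.logb 2 (m * r / w) := by
        rw [hu, div_le_iff₀ hw]
        linarith [step1]
      have heq : Real.logb 2 (m * r / w) = Real.logb 2 (m / w) + L := by
        rw [show m * r / w = (m / w) * r by ring,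
          Real.logb_mul (by positivity) hrpos.ne']
      have hmw : m / w ≤ u + 1 := by
        rw [hu, div_add' _ _ _ hw.ne', div_le_div_iff_of_pos_right hw]
        linarith
      have := Real.logb_le_logb_of_le hb (by positivity : (0:ℝ) < m / w) hmw
      linarith [heq ▸ h1]
    have hsle : s ≤ Real.logb 2 (s + L + 1) := by
      have : u + 1 = s + L + 1 := by rw [hs]; ring
      linarith [this ▸ hstep2]
    -- 2^s ≤ s + L + 1
    have hpow1 : (2:ℝ) ^ s ≤ s + L + 1 := by
      have hpos : (0:ℝ) < s + L + 1 := by linarith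
      exact (Real.le_logb_iff_rpow_le hb hpos).mp hsle
    -- 2L < 2^s
    have hpow2 : 2 * L < (2:ℝ) ^ s := by
      have h1 : 1 + Real.logb 2 L < s := by
        have := hsplit ▸ hclog
        rw [hs]; linarith
      have := Real.rpow_lt_rpow_left_iff hb |>.mpr h1
      rwa [Real.rpow_add h2pos, Real.rpow_one, Real.rpow_logb h2pos h2ne hLpos] at this
    have hLs : L < s + 1 := by linarith
    -- so 2^s < 2s + 2, i.e. 2^(s-1) < s + 1
    have hfinal : (2:ℝ) ^ (s - 1) < s + 1 := by
      have h2s : (2:ℝ) ^ s = 2 ^ (s - 1) * 2 ^ (1:ℝ) := by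
        rw [← Real.rpow_add h2pos]; norm_num
      rw [Real.rpow_one] at h2s
      nlinarith
    linarith [pow_aux s hs3.le]
end
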